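/- Let ω > 0 be a flatness constant for dimension n. Let P ⊆ ℝⁿ be a nonempty rational polyhedron of finite lattice width, let c ∈ ℤⁿ be a width direction of P (a nonzero integral vector with w_c(P) = w(P)), and let β := min{c·x : x ∈ P}. Then P contains a point of ℤⁿ if and only if the polyhedron P ∩ {x : β ≤ c·x ≤ β + ω} contains a point of ℤⁿ. -/

import Mathlib

open Matrix Set MeasureTheory

noncomputable def widthAlong {n : ℕ} (K : Set (Fin n → ℝ)) (c : Fin n → ℝ) : EReal :=
  sSup ((fun x => ((∑ i, c i * x i : ℝ) : EReal)) '' K) -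
    sInf ((fun x => ((∑ i, c i * x i : ℝ) : EReal)) '' K)

noncomputable def latticeWidth {n : ℕ} (K : Set (Fin n → ℝ)) : EReal :=
  sInf {w : EReal | ∃ c : Fin n → ℤ, c ≠ 0 ∧ w = widthAlong K (fun i => (c i : ℝ))}

def IsFlatnessConstant (n : ℕ) (ω : ℝ) : Prop :=
  0 < ω ∧ ∀ K : Set (Fin n → ℝ),
    Bornology.IsBounded K → IsClosed K → Convex ℝ K → volume K ≠ 0 →
    (ω : EReal) ≤ latticeWidth K → ∃ z : Fin n → ℤ, (fun i => (z i : ℝ)) ∈ K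

def IsRatPolyhedron {n : ℕ} (P : Set (Fin n → ℝ)) : Prop :=
  ∃ (m : ℕ) (A : Matrix (Fin m) (Fin n) ℚ) (b : Fin m → ℚ),
    P = {x | ∀ i, (∑ j, (A i j : ℝ) * x j) ≤ (b i : ℝ)}

theorem width_ge {n : ℕ} {K : Set (Fin n → ℝ)} {c : Fin n → ℝ} {u v : Fin n → ℝ}
    (hu : u ∈ K) (hv : v ∈ K) :
    (((∑ i, c i * u i) - (∑ i, c i * v i) : ℝ) : EReal) ≤ widthAlong K c := by
  have h1 : ((∑ i, c i * u i : ℝ) : EReal) ≤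
      sSup ((fun x => ((∑ i, c i * x i : ℝ) : EReal)) '' K) := le_sSup ⟨u, hu, rfl⟩
  have h2 : sInf ((fun x => ((∑ i, c i * x i : ℝ) : EReal)) '' K) ≤
      ((∑ i, c i * v i : ℝ) : EReal) := sInf_le ⟨v, hv, rfl⟩
  rw [EReal.coe_sub]
  exact EReal.sub_le_sub h1 h2

theorem exists_pair {n : ℕ} {K : Set (Fin n → ℝ)} {c : Fin n → ℝ} {t : ℝ}
    (hne : K.Nonempty) (h : (t : EReal) < widthAlong K c) :
    ∃ u ∈ K, ∃ v ∈ K, t < (∑ i, c i * u i) - (∑ i, c i * v i) := by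
  obtain ⟨x0, hx0⟩ := hne
  set F := (fun x => ((∑ i, c i * x i : ℝ) : EReal)) '' K with hF
  have hmem : ((∑ i, c i * x0 i : ℝ) : EReal) ∈ F := ⟨x0, hx0, rfl⟩
  by_cases hI : sInf F = ⊥
  · have hlt : sInf F < ((((∑ i, c i * x0 i) - t : ℝ)) : EReal) := by
      rw [hI]; exact bot_lt_iff_ne_bot.2 (EReal.coe_ne_bot _)
    obtain ⟨a, haF, ha⟩ := sInf_lt_iff.1 hlt
    obtain ⟨v, hvK, rfl⟩ := haF
    refine ⟨x0, hx0, v, hvK, ?_⟩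
    have := EReal.coe_lt_coe_iff.1 ha
    linarith
  · have hItop : sInf F ≠ ⊤ := (lt_of_le_of_lt (sInf_le hmem) (EReal.coe_lt_top _)).ne
    set r := (sInf F).toReal with hrdef
    have hr : sInf F = (r : EReal) := (EReal.coe_toReal hItop hI).symm
    have h' : ((t + r : ℝ) : EReal) < sSup F := by
      have : (t : EReal) < sSup F - (r : EReal) := by rw [← hr]; exact h
      have := (EReal.lt_sub_iff_add_lt (Or.inl (EReal.coe_ne_bot r))
        (Or.inl (EReal.coe_ne_top r))).1 this
      rw [← EReal.coe_add] at this; exact this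
    obtain ⟨a, haF, ha⟩ := lt_sSup_iff.1 h'
    obtain ⟨u, huK, rfl⟩ := haF
    have hu' : t + r < ∑ i, c i * u i := EReal.coe_lt_coe_iff.1 ha
    have hlt2 : sInf F < ((((∑ i, c i * u i) - t : ℝ)) : EReal) := by
      rw [hr]; exact_mod_cast (by linarith : r < (∑ i, c i * u i) - t)
    obtain ⟨a, haF, ha2⟩ := sInf_lt_iff.1 hlt2
    obtain ⟨v, hvK, rfl⟩ := haF
    refine ⟨u, huK, v, hvK, ?_⟩
    have := EReal.coe_lt_coe_iff.1 ha2
    linarith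

theorem poly_convex {m n : ℕ} (A : Matrix (Fin m) (Fin n) ℚ) (b : Fin m → ℚ) :
    Convex ℝ {x : Fin n → ℝ | ∀ i, (∑ j, (A i j : ℝ) * x j) ≤ (b i : ℝ)} := by
  intro x hx y hy a b' ha hb' hab i
  have hx' := hx i
  have hy' := hy i
  have : ∑ j, (A i j : ℝ) * (a * x j + b' * y j)
      = a * (∑ j, (A i j : ℝ) * x j) + b' * (∑ j, (A i j : ℝ) * y j) := by
    rw [Finset.mul_sum, Finset.mul_sum, ← Finset.sum_add_distrib]
    congr 1; ext j; ring
  calc ∑ j, (A i j : ℝ) * ((a • x + b' • y) j)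
      = a * (∑ j, (A i j : ℝ) * x j) + b' * (∑ j, (A i j : ℝ) * y j) := by
        simpa [Pi.add_apply, Pi.smul_apply, smul_eq_mul] using this
    _ ≤ a * (b i : ℝ) + b' * (b i : ℝ) := by
        gcongr
    _ = (b i : ℝ) := by rw [← add_mul, hab, one_mul]

theorem poly_closed {m n : ℕ} (A : Matrix (Fin m) (Fin n) ℚ) (b : Fin m → ℚ) :
    IsClosed {x : Fin n → ℝ | ∀ i, (∑ j, (A i j : ℝ) * x j) ≤ (b i : ℝ)} := by
  have : {x : Fin n → ℝ | ∀ i, (∑ j, (A i j : ℝ) * x j) ≤ (b i : ℝ)}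
      = ⋂ i, {x : Fin n → ℝ | (∑ j, (A i j : ℝ) * x j) ≤ (b i : ℝ)} := by
    ext x; simp
  rw [this]
  exact isClosed_iInter fun i => isClosed_le (by continuity) continuous_const

theorem poly_ball_or_flat {m n : ℕ} (A : Matrix (Fin m) (Fin n) ℚ) (b : Fin m → ℚ)
    (hne : Set.Nonempty {x : Fin n → ℝ | ∀ i, (∑ j, (A i j : ℝ) * x j) ≤ (b i : ℝ)}) :
    (∃ p ρ, 0 < ρ ∧ Metric.closedBall p ρ ⊆
        {x : Fin n → ℝ | ∀ i, (∑ j, (A i j : ℝ) * x j) ≤ (b i : ℝ)}) ∨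
    (∃ d : Fin n → ℤ, d ≠ 0 ∧ ∀ x ∈ {x : Fin n → ℝ | ∀ i, (∑ j, (A i j : ℝ) * x j) ≤ (b i : ℝ)},
        ∀ y ∈ {x : Fin n → ℝ | ∀ i, (∑ j, (A i j : ℝ) * x j) ≤ (b i : ℝ)},
        ∑ j, (d j : ℝ) * x j = ∑ j, (d j : ℝ) * y j) := by
  classical
  set P := {x : Fin n → ℝ | ∀ i, (∑ j, (A i j : ℝ) * x j) ≤ (b i : ℝ)} with hPdef
  obtain ⟨x1, hx1⟩ := hne
  by_cases hE : ∃ i, A i ≠ 0 ∧ ∀ x ∈ P, (b i : ℝ) ≤ ∑ j, (A i j : ℝ) * x j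
  · -- flat case
    right
    obtain ⟨i, hAi, hgei⟩ := hE
    set N : ℕ := ∏ j, (A i j).den with hN
    have hNpos : 0 < N := Finset.prod_pos fun j _ => (A i j).pos
    set d : Fin n → ℤ := fun j => (A i j).num * ((N / (A i j).den : ℕ) : ℤ) with hd
    have key : ∀ j, ((d j : ℝ)) = (A i j : ℝ) * N := by
      intro j
      have hdvd : (A i j).den ∣ N := Finset.dvd_prod_of_mem _ (Finset.mem_univ j)
      have hden : ((A i j).den : ℝ) ≠ 0 := Nat.cast_ne_zero.2 (A i j).den_nz
      have hcast : ((N / (A i j).den : ℕ) : ℝ) = (N : ℝ) / ((A i j).den : ℝ) :=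
        Nat.cast_div hdvd hden
      have hA : (A i j : ℝ) = ((A i j).num : ℝ) / ((A i j).den : ℝ) := by
        rw [Rat.cast_def]
      show (((A i j).num * ((N / (A i j).den : ℕ) : ℤ) : ℤ) : ℝ) = (A i j : ℝ) * N
      rw [Int.cast_mul, Int.cast_natCast, hcast, hA]
      field_simp
    have hd0 : d ≠ 0 := by
      obtain ⟨j0, hj0⟩ : ∃ j0, A i j0 ≠ 0 := by
        by_contra hcon
        push_neg at hcon
        exact hAi (funext hcon)
      intro hcon
      have : d j0 = 0 := congrFun hcon j0
      rw [hd] at this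
      have hnum : (A i j0).num ≠ 0 := Rat.num_ne_zero.2 hj0
      have hdvd : (A i j0).den ∣ N := Finset.dvd_prod_of_mem _ (Finset.mem_univ j0)
      have hq : (N / (A i j0).den : ℕ) ≠ 0 :=
        Nat.div_ne_zero_iff.2 ⟨(A i j0).den_nz, Nat.le_of_dvd hNpos hdvd⟩
      exact (mul_ne_zero hnum (Int.natCast_ne_zero.2 hq)) this
    refine ⟨d, hd0, ?_⟩
    have hconst : ∀ x ∈ P, ∑ j, (d j : ℝ) * x j = (N : ℝ) * (b i : ℝ) := by
      intro x hx
      have heq : ∑ j, (A i j : ℝ) * x j = (b i : ℝ) := le_antisymm (hx i) (hgei x hx)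
      calc ∑ j, (d j : ℝ) * x j = ∑ j, (N : ℝ) * ((A i j : ℝ) * x j) := by
            apply Finset.sum_congr rfl; intro j _; rw [key j]; ring
        _ = (N : ℝ) * ∑ j, (A i j : ℝ) * x j := by rw [Finset.mul_sum]
        _ = (N : ℝ) * (b i : ℝ) := by rw [heq]
    intro x hx y hy
    rw [hconst x hx, hconst y hy]
  · -- full-dimensional case
    left
    push_neg at hE
    set I : Finset (Fin m) := Finset.univ.filter (fun i => A i ≠ 0) with hI
    have hb_nonneg : ∀ i, A i = 0 → (0 : ℝ) ≤ (b i : ℝ) := by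
      intro i hAi
      have := hx1 i
      simpa [hAi] using this
    by_cases hIe : I.Nonempty
    · -- choose strict points
      have hstrict : ∀ i ∈ I, ∃ x ∈ P, ∑ j, (A i j : ℝ) * x j < (b i : ℝ) := by
        intro i hi
        have hAi : A i ≠ 0 := by simpa [hI] using (Finset.mem_filter.1 hi).2
        obtain ⟨x, hxP, hxlt⟩ := hE i hAi
        exact ⟨x, hxP, hxlt⟩
      choose! xx hxxP hxxlt using hstrict
      set cI : ℝ := (I.card : ℝ) with hcI
      have hcIpos : 0 < cI := by
        rw [hcI]; exact_mod_cast Finset.card_pos.2 hIe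
      set xb : Fin n → ℝ := cI⁻¹ • ∑ i ∈ I, xx i with hxb
      have hbar : ∀ k0 : Fin m, ∑ j, (A k0 j : ℝ) * xb j
          = cI⁻¹ * ∑ i ∈ I, ∑ j, (A k0 j : ℝ) * (xx i) j := by
        intro k0
        have e1 : ∀ j, (A k0 j : ℝ) * xb j = ∑ i ∈ I, cI⁻¹ * ((A k0 j : ℝ) * xx i j) := by
          intro j
          rw [hxb]
          simp only [Pi.smul_apply, Finset.sum_apply, smul_eq_mul]
          rw [Finset.mul_sum, Finset.mul_sum]
          exact Finset.sum_congr rfl fun i _ => by ring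
        calc ∑ j, (A k0 j : ℝ) * xb j
            = ∑ j, ∑ i ∈ I, cI⁻¹ * ((A k0 j : ℝ) * xx i j) :=
              Finset.sum_congr rfl fun j _ => e1 j
          _ = ∑ i ∈ I, ∑ j, cI⁻¹ * ((A k0 j : ℝ) * xx i j) := Finset.sum_comm
          _ = cI⁻¹ * ∑ i ∈ I, ∑ j, (A k0 j : ℝ) * xx i j := by
              rw [Finset.mul_sum]
              exact Finset.sum_congr rfl fun i _ => by rw [Finset.mul_sum]
      have hstrictbar : ∀ k0 ∈ I, ∑ j, (A k0 j : ℝ) * xb j < (b k0 : ℝ) := by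
        intro k0 hk0
        rw [hbar k0]
        have hsum : ∑ i ∈ I, ∑ j, (A k0 j : ℝ) * (xx i) j < ∑ _i ∈ I, (b k0 : ℝ) :=
          Finset.sum_lt_sum (fun i hi => hxxP i hi k0) ⟨k0, hk0, hxxlt k0 hk0⟩
        rw [Finset.sum_const] at hsum
        calc cI⁻¹ * ∑ i ∈ I, ∑ j, (A k0 j : ℝ) * (xx i) j
            < cI⁻¹ * (I.card • (b k0 : ℝ)) := by
              apply mul_lt_mul_of_pos_left hsum (inv_pos.2 hcIpos)
          _ = (b k0 : ℝ) := by
              rw [nsmul_eq_mul, ← hcI]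
              field_simp
      have hbarP : ∀ k0, ∑ j, (A k0 j : ℝ) * xb j ≤ (b k0 : ℝ) := by
        intro k0
        by_cases hk0 : k0 ∈ I
        · exact (hstrictbar k0 hk0).le
        · have hAk : A k0 = 0 := by
            by_contra hcon
            exact hk0 (by simp [hI, hcon])
          have hz : ∀ j, (A k0 j : ℝ) = 0 := fun j => by rw [congrFun hAk j]; simp
          simpa [hz] using hb_nonneg k0 hAk
      set L : Fin m → ℝ := fun k0 => ∑ j, |(A k0 j : ℝ)| with hL
      have hLnn : ∀ k0, 0 ≤ L k0 := fun k0 => Finset.sum_nonneg fun j _ => abs_nonneg _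
      set ρ : ℝ := I.inf' hIe (fun k0 => ((b k0 : ℝ) - ∑ j, (A k0 j : ℝ) * xb j) / (L k0 + 1))
        with hρ
      have hρpos : 0 < ρ := by
        rw [hρ, Finset.lt_inf'_iff]
        intro k0 hk0
        exact div_pos (by linarith [hstrictbar k0 hk0]) (by linarith [hLnn k0])
      refine ⟨xb, ρ, hρpos, ?_⟩
      intro y hy k0
      by_cases hk0 : k0 ∈ I
      · have hdist : ∀ j, |y j - xb j| ≤ ρ := by
          intro j
          have h1 : dist (y j) (xb j) ≤ dist y xb := dist_le_pi_dist y xb j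
          have h2 : dist y xb ≤ ρ := Metric.mem_closedBall.1 hy
          rw [Real.dist_eq] at h1
          linarith
        have hbound : ∑ j, (A k0 j : ℝ) * y j ≤ (∑ j, (A k0 j : ℝ) * xb j) + L k0 * ρ := by
          have : ∑ j, (A k0 j : ℝ) * y j - ∑ j, (A k0 j : ℝ) * xb j
              = ∑ j, (A k0 j : ℝ) * (y j - xb j) := by
            rw [← Finset.sum_sub_distrib]
            apply Finset.sum_congr rfl
            intro j _
            ring
          have hle : ∑ j, (A k0 j : ℝ) * (y j - xb j) ≤ ∑ j, |(A k0 j : ℝ)| * ρ := by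
            apply Finset.sum_le_sum
            intro j _
            calc (A k0 j : ℝ) * (y j - xb j) ≤ |(A k0 j : ℝ) * (y j - xb j)| := le_abs_self _
              _ = |(A k0 j : ℝ)| * |y j - xb j| := abs_mul _ _
              _ ≤ |(A k0 j : ℝ)| * ρ := by
                  apply mul_le_mul_of_nonneg_left (hdist j) (abs_nonneg _)
          have hLρ : ∑ j, |(A k0 j : ℝ)| * ρ = L k0 * ρ := by
            rw [hL, Finset.sum_mul]
          linarith
        have hρle : ρ ≤ ((b k0 : ℝ) - ∑ j, (A k0 j : ℝ) * xb j) / (L k0 + 1) := by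
          rw [hρ]
          exact Finset.inf'_le _ hk0
        have h3 : (L k0 + 1) * ρ ≤ (b k0 : ℝ) - ∑ j, (A k0 j : ℝ) * xb j := by
          rw [← le_div_iff₀' (by linarith [hLnn k0])]
          exact hρle
        nlinarith [hLnn k0, hρpos]
      · have hAk : A k0 = 0 := by
          by_contra hcon
          exact hk0 (by simp [hI, hcon])
        have hz : ∀ j, (A k0 j : ℝ) = 0 := fun j => by rw [congrFun hAk j]; simp
        simpa [hz] using hb_nonneg k0 hAk
    · -- all rows zero : P = univ
      refine ⟨x1, 1, one_pos, fun y _ => ?_⟩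
      intro i
      have hAi : A i = 0 := by
        by_contra hcon
        exact hIe ⟨i, by simp [hI, hcon]⟩
      have : ∀ j, (A i j : ℝ) = 0 := fun j => by rw [congrFun hAi j]; simp
      simpa [this] using hb_nonneg i hAi

set_option maxHeartbeats 2000000 in
/-- Lemma on the use of the flatness theorem.  Let `ω` be a flatness
constant for dimension `n`, let `P` be a nonempty rational polyhedron of finite lattice
width, let `c` be a width direction of `P`, and `β = min {c·x : x ∈ P}`.  Then `P`
contains an integral point iff `P ∩ {x : β ≤ c·x ≤ β + ω}` contains an integral point. -/
theorem flatness_application {n : ℕ} (ω : ℝ) (hω : IsFlatnessConstant n ω)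
    (P : Set (Fin n → ℝ)) (hP : IsRatPolyhedron P) (hne : P.Nonempty)
    (hfin : latticeWidth P ≠ ⊤)
    (c : Fin n → ℤ) (hc : c ≠ 0)
    (hdir : widthAlong P (fun i => (c i : ℝ)) = latticeWidth P)
    (β : ℝ)
    (hβ : IsLeast {r : ℝ | ∃ x ∈ P, r = ∑ i, (c i : ℝ) * x i} β) :
    (∃ z : Fin n → ℤ, (fun i => (z i : ℝ)) ∈ P) ↔
      (∃ z : Fin n → ℤ, (fun i => (z i : ℝ)) ∈ P ∧
        β ≤ ∑ i, (c i : ℝ) * (z i : ℝ) ∧ ∑ i, (c i : ℝ) * (z i : ℝ) ≤ β + ω) := by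
  classical
  obtain ⟨hωpos, hflat⟩ := hω
  obtain ⟨m, A, b, rfl⟩ := hP
  set P := {x : Fin n → ℝ | ∀ i, (∑ j, (A i j : ℝ) * x j) ≤ (b i : ℝ)} with hPdef
  constructor
  swap
  · rintro ⟨z, hz, -, -⟩; exact ⟨z, hz⟩
  rintro ⟨z0, hz0⟩
  obtain ⟨hβmem, hβlb⟩ := hβ
  obtain ⟨x0, hx0P, hx0β⟩ := hβmem
  set f : (Fin n → ℝ) → ℝ := fun x => ∑ i, (c i : ℝ) * x i with hf
  have hx0β' : f x0 = β := hx0β.symm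
  have hlbf : ∀ x ∈ P, β ≤ f x := fun x hx => hβlb ⟨x, hx, rfl⟩
  have hint : ∀ z : Fin n → ℤ, f (fun i => (z i : ℝ)) = ((∑ i, c i * z i : ℤ) : ℝ) := by
    intro z; rw [hf]; push_cast; ring
  -- least integral value
  obtain ⟨γ, ⟨zs, hzsP, hzsγ⟩, hγmin⟩ :=
    Int.exists_least_of_bdd (P := fun k =>
      ∃ z : Fin n → ℤ, ((fun i => (z i : ℝ)) ∈ P) ∧ (∑ i, c i * z i : ℤ) = k)
      ⟨⌈β⌉, by
        rintro k ⟨z, hzP, rfl⟩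
        rw [Int.ceil_le]
        push_cast
        have := hlbf _ hzP
        rw [hint z] at this
        exact_mod_cast this⟩
      ⟨∑ i, c i * z0 i, z0, hz0, rfl⟩
  by_cases hcase : (γ : ℝ) ≤ β + ω
  · refine ⟨zs, hzsP, hlbf _ hzsP, ?_⟩
    have hzv : (∑ i, (c i : ℝ) * (zs i : ℝ)) = (γ : ℝ) := by
      rw [← hzsγ]; push_cast; ring
    rw [hzv]; exact hcase
  exfalso
  push_neg at hcase
  -- the supremum along c
  set Fe := (fun x => ((f x : ℝ) : EReal)) '' P with hFe
  have hwidth : widthAlong P (fun i => (c i : ℝ)) = sSup Fe - sInf Fe := rfl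
  have hinfFe : sInf Fe = (β : EReal) := by
    apply IsLeast.csInf_eq
    constructor
    · exact ⟨x0, hx0P, show ((f x0 : ℝ) : EReal) = (β : EReal) by rw [hx0β']⟩
    · rintro a ⟨x, hx, rfl⟩
      exact EReal.coe_le_coe_iff.2 (hlbf x hx)
  have hFtop : sSup Fe ≠ ⊤ := by
    intro htop
    apply hfin
    rw [← hdir, hwidth, htop, hinfFe, EReal.top_sub_coe]
  have hβle : (β : EReal) ≤ sSup Fe :=
    le_sSup ⟨x0, hx0P, show ((f x0 : ℝ) : EReal) = (β : EReal) by rw [hx0β']⟩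
  have hFbot : sSup Fe ≠ ⊥ := ((bot_lt_iff_ne_bot.2 (EReal.coe_ne_bot β)).trans_le hβle).ne'
  set s : ℝ := (sSup Fe).toReal with hsdef
  have hs : sSup Fe = (s : EReal) := (EReal.coe_toReal hFtop hFbot).symm
  set W : ℝ := s - β with hW
  have hlatW : latticeWidth P = ((W : ℝ) : EReal) := by
    rw [← hdir, hwidth, hs, hinfFe, ← EReal.coe_sub]
  have hfs : ∀ x ∈ P, f x ≤ s := by
    intro x hx
    have : ((f x : ℝ) : EReal) ≤ (s : EReal) := hs ▸ le_sSup ⟨x, hx, rfl⟩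
    exact_mod_cast this
  have hγs : (γ : ℝ) ≤ s := by
    have h1 := hfs _ hzsP
    rw [hint zs, hzsγ] at h1
    exact_mod_cast h1
  have hWω : ω < W := by rw [hW]; linarith
  set T : ℝ := (γ : ℝ) - ((γ : ℝ) - β - ω) / 2 with hT
  have hTγ : T < γ := by rw [hT]; linarith
  have hTβω : β + ω < T := by rw [hT]; linarith
  have hTW : T - β < W := by rw [hT, hW]; linarith
  set μ : ℝ := (T - β) / W with hμ
  have hWpos : 0 < W := by linarith
  have hμpos : 0 < μ := div_pos (by linarith) hWpos
  have hμle : μ ≤ 1 := by rw [hμ]; rw [div_le_one hWpos]; linarith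
  have hμW : μ * W = T - β := by rw [hμ]; field_simp
  -- every direction has width ≥ W
  have hwd : ∀ d : Fin n → ℤ, d ≠ 0 →
      ((W : ℝ) : EReal) ≤ widthAlong P (fun i => (d i : ℝ)) := by
    intro d hd
    have : latticeWidth P ≤ widthAlong P (fun i => (d i : ℝ)) := sInf_le ⟨d, hd, rfl⟩
    rwa [hlatW] at this
  -- affine computation
  have hf_affine : ∀ (dR : Fin n → ℝ) (x y : Fin n → ℝ),
      (∑ i, dR i * (x + μ • (y - x)) i)
        = (∑ i, dR i * x i) + μ * ((∑ i, dR i * y i) - (∑ i, dR i * x i)) := by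
    intro dR x y
    simp only [Pi.add_apply, Pi.smul_apply, Pi.sub_apply, smul_eq_mul]
    have h1 : ∑ i, dR i * (x i + μ * (y i - x i))
        = ∑ i, (dR i * x i + (μ * (dR i * y i) - μ * (dR i * x i))) :=
      Finset.sum_congr rfl fun i _ => by ring
    rw [h1, Finset.sum_add_distrib, Finset.sum_sub_distrib, ← Finset.mul_sum, ← Finset.mul_sum]
    ring
  have hmemscale : ∀ x ∈ P, x0 + μ • (x - x0) ∈ P := by
    intro x hx
    have hrw : x0 + μ • (x - x0) = (1 - μ) • x0 + μ • x := by
      ext i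
      simp only [Pi.add_apply, Pi.smul_apply, Pi.sub_apply, smul_eq_mul]
      ring
    rw [hrw]
    exact poly_convex A b hx0P hx (by linarith) (by linarith) (by ring)
  have hscaleT : ∀ x ∈ P, f (x0 + μ • (x - x0)) ≤ T := by
    intro x hx
    have h1 : f (x0 + μ • (x - x0)) = f x0 + μ * (f x - f x0) := hf_affine _ x0 x
    rw [h1, hx0β']
    have h2 : f x - β ≤ W := by have := hfs x hx; rw [hW]; linarith
    nlinarith
  set K := P ∩ {x | f x ≤ T} with hK
  have hx0T : f x0 ≤ T := by rw [hx0β']; linarith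
  have hx0K : x0 ∈ K := ⟨hx0P, hx0T⟩
  have hfcont : Continuous f := by
    rw [hf]
    exact continuous_finset_sum _ fun i _ => continuous_const.mul (continuous_apply i)
  have hKclosed : IsClosed K := (poly_closed A b).inter (isClosed_le hfcont continuous_const)
  have hKconv : Convex ℝ K := by
    apply (poly_convex A b).inter
    intro x hx y hy a b' ha hb' hab
    have hflin : f (a • x + b' • y) = a * f x + b' * f y := by
      rw [hf]
      simp only [Pi.add_apply, Pi.smul_apply, smul_eq_mul]
      have h1 : ∑ i, (c i : ℝ) * (a * x i + b' * y i)
          = ∑ i, (a * ((c i : ℝ) * x i) + b' * ((c i : ℝ) * y i)) :=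
        Finset.sum_congr rfl fun i _ => by ring
      rw [h1, Finset.sum_add_distrib, ← Finset.mul_sum, ← Finset.mul_sum]
    show f _ ≤ T
    rw [hflin]
    calc a * f x + b' * f y ≤ a * T + b' * T := by
          apply add_le_add <;> apply mul_le_mul_of_nonneg_left <;> first | exact hx | exact hy | exact ha | exact hb'
      _ = T := by rw [← add_mul, hab, one_mul]
  -- full dimensionality
  rcases poly_ball_or_flat A b ⟨x0, hx0P⟩ with ⟨p, ρ, hρ, hball⟩ | ⟨d, hd0, hdflat⟩
  swap
  · -- flat case is impossible
    have hwle : widthAlong P (fun i => (d i : ℝ)) ≤ (((0 : ℝ)) : EReal) := by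
      have hup : sSup ((fun x => ((∑ i, (d i : ℝ) * x i : ℝ) : EReal)) '' P)
          ≤ ((∑ i, (d i : ℝ) * x0 i : ℝ) : EReal) := by
        apply sSup_le
        rintro a ⟨x, hx, rfl⟩
        exact le_of_eq (congrArg Real.toEReal (hdflat x hx x0 hx0P))
      have hlo : ((∑ i, (d i : ℝ) * x0 i : ℝ) : EReal)
          ≤ sInf ((fun x => ((∑ i, (d i : ℝ) * x i : ℝ) : EReal)) '' P) := by
        apply le_sInf
        rintro a ⟨x, hx, rfl⟩
        exact le_of_eq (congrArg Real.toEReal (hdflat x hx x0 hx0P).symm)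
      have := EReal.sub_le_sub hup hlo
      calc widthAlong P (fun i => (d i : ℝ)) ≤
          ((∑ i, (d i : ℝ) * x0 i : ℝ) : EReal) - ((∑ i, (d i : ℝ) * x0 i : ℝ) : EReal) := this
        _ = (((0 : ℝ)) : EReal) := by rw [← EReal.coe_sub]; norm_num
    have := (hwd d hd0).trans hwle
    have : W ≤ 0 := EReal.coe_le_coe_iff.1 this
    linarith
  -- scaled ball inside K
  set p' : Fin n → ℝ := x0 + μ • (p - x0) with hp'
  set ρ' : ℝ := μ * ρ with hρ'
  have hρ'pos : 0 < ρ' := mul_pos hμpos hρ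
  have hballK : Metric.closedBall p' ρ' ⊆ K := by
    intro y hy
    set xh : Fin n → ℝ := x0 + μ⁻¹ • (y - x0) with hxh
    have hyx : y = x0 + μ • (xh - x0) := by
      ext i
      simp only [hxh, Pi.add_apply, Pi.smul_apply, Pi.sub_apply, smul_eq_mul]
      field_simp
      ring
    have hxhP : xh ∈ P := by
      apply hball
      rw [Metric.mem_closedBall]
      have hsub : xh - p = μ⁻¹ • (y - p') := by
        ext i
        simp only [hxh, hp', Pi.add_apply, Pi.smul_apply, Pi.sub_apply, smul_eq_mul]
        field_simp
        ring
      rw [dist_eq_norm, hsub, norm_smul]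
      have hnorm : ‖y - p'‖ ≤ ρ' := by
        rw [← dist_eq_norm]
        exact Metric.mem_closedBall.1 hy
      calc ‖μ⁻¹‖ * ‖y - p'‖ ≤ ‖μ⁻¹‖ * ρ' := by
            apply mul_le_mul_of_nonneg_left hnorm (norm_nonneg _)
        _ = μ⁻¹ * (μ * ρ) := by rw [Real.norm_eq_abs, abs_of_pos (inv_pos.2 hμpos), hρ']
        _ = ρ := by field_simp
    rw [hyx]
    exact ⟨hmemscale _ hxhP, hscaleT _ hxhP⟩
  -- witnesses for short directions
  have hwit : ∀ d : Fin n → ℤ, d ≠ 0 → ∃ uv : (Fin n → ℝ) × (Fin n → ℝ),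
      uv.1 ∈ K ∧ uv.2 ∈ K ∧
      ω < (∑ i, (d i : ℝ) * uv.1 i) - (∑ i, (d i : ℝ) * uv.2 i) := by
    intro d hd
    have hωμ : ω / μ < W := by
      rw [div_lt_iff₀ hμpos]
      nlinarith [hμW, hTβω]
    have h1 : ((ω / μ : ℝ) : EReal) < widthAlong P (fun i => (d i : ℝ)) :=
      lt_of_lt_of_le (EReal.coe_lt_coe_iff.2 hωμ) (hwd d hd)
    obtain ⟨uh, huh, vh, hvh, hgt⟩ := exists_pair ⟨x0, hx0P⟩ h1
    refine ⟨(x0 + μ • (uh - x0), x0 + μ • (vh - x0)),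
      ⟨hmemscale _ huh, hscaleT _ huh⟩, ⟨hmemscale _ hvh, hscaleT _ hvh⟩, ?_⟩
    have e1 := hf_affine (fun i => (d i : ℝ)) x0 uh
    have e2 := hf_affine (fun i => (d i : ℝ)) x0 vh
    simp only at e1 e2 ⊢
    rw [e1, e2]
    have : ω < μ * ((∑ i, (d i : ℝ) * uh i) - (∑ i, (d i : ℝ) * vh i)) := by
      rw [div_lt_iff₀ hμpos] at hgt
      nlinarith
    nlinarith
  set w : (Fin n → ℤ) → (Fin n → ℝ) × (Fin n → ℝ) :=
    fun d => if h : d = 0 then (x0, x0) else (hwit d h).choose with hwdef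
  have hwspec : ∀ (d : Fin n → ℤ) (h : d ≠ 0), (w d).1 ∈ K ∧ (w d).2 ∈ K ∧
      ω < (∑ i, (d i : ℝ) * (w d).1 i) - (∑ i, (d i : ℝ) * (w d).2 i) := by
    intro d h
    simp only [hwdef, dif_neg h]
    exact (hwit d h).choose_spec
  have hwK : ∀ d : Fin n → ℤ, (w d).1 ∈ K ∧ (w d).2 ∈ K := by
    intro d
    by_cases h : d = 0
    · simp only [hwdef, dif_pos h]
      exact ⟨hx0K, hx0K⟩
    · exact ⟨(hwspec d h).1, (hwspec d h).2.1⟩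
  -- finite set of short directions
  set M : ℕ := ⌈ω / (2 * ρ')⌉₊ with hM
  set D : Finset (Fin n → ℤ) := Fintype.piFinset (fun _ => Finset.Icc (-(M : ℤ)) (M : ℤ))
    with hD
  set G : Set (Fin n → ℝ) := Metric.closedBall p' ρ' ∪
    ((fun d => (w d).1) '' ↑D ∪ (fun d => (w d).2) '' ↑D) with hG
  have hGK : G ⊆ K := by
    rintro y (hy | hy | hy)
    · exact hballK hy
    · obtain ⟨d, -, rfl⟩ := hy
      exact (hwK d).1
    · obtain ⟨d, -, rfl⟩ := hy
      exact (hwK d).2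
  set Ks : Set (Fin n → ℝ) := closure (convexHull ℝ G) with hKs
  have hKsK : Ks ⊆ K := closure_minimal (convexHull_min hGK hKconv) hKclosed
  -- boundedness
  have hGbdd : Bornology.IsBounded G := by
    apply Bornology.IsBounded.union Metric.isBounded_closedBall
    exact Bornology.IsBounded.union
      ((D.finite_toSet.image _).isBounded) ((D.finite_toSet.image _).isBounded)
  obtain ⟨R, hR⟩ := hGbdd.subset_closedBall 0
  have hKsbdd : Bornology.IsBounded Ks := by
    apply Bornology.IsBounded.subset (Metric.isBounded_closedBall (x := (0 : Fin n → ℝ)) (r := R))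
    apply closure_minimal (convexHull_min hR (convex_closedBall _ _)) Metric.isClosed_closedBall
  -- volume positive
  have hballKs : Metric.closedBall p' ρ' ⊆ Ks :=
    (subset_trans (subset_union_left) (subset_convexHull ℝ G)).trans subset_closure
  have hvol : volume Ks ≠ 0 := by
    have h1 : (0 : ENNReal) < volume (Metric.ball p' ρ') :=
      Metric.measure_ball_pos (volume : Measure (Fin n → ℝ)) p' hρ'pos
    have h2 : volume (Metric.ball p' ρ') ≤ volume Ks :=
      measure_mono (Metric.ball_subset_closedBall.trans hballKs)
    exact (lt_of_lt_of_le h1 h2).ne'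
  -- lattice width of Ks
  have hKswidth : (ω : EReal) ≤ latticeWidth Ks := by
    apply le_sInf
    rintro wv ⟨d, hd0, rfl⟩
    by_cases hdD : d ∈ D
    · have hu : (w d).1 ∈ Ks :=
        ((subset_trans (subset_union_right) (subset_convexHull ℝ G)).trans subset_closure)
          (Or.inl ⟨d, hdD, rfl⟩)
      have hv : (w d).2 ∈ Ks :=
        ((subset_trans (subset_union_right) (subset_convexHull ℝ G)).trans subset_closure)
          (Or.inr ⟨d, hdD, rfl⟩)
      have hge := width_ge (c := fun i => (d i : ℝ)) hu hv
      have hgap := (hwspec d hd0).2.2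
      exact le_trans (EReal.coe_le_coe_iff.2 hgap.le) hge
    · -- long direction : use the ball
      obtain ⟨j, hj⟩ : ∃ j, (M : ℤ) < |d j| := by
        by_contra hcon
        push_neg at hcon
        apply hdD
        rw [hD, Fintype.mem_piFinset]
        intro j
        rw [Finset.mem_Icc]
        constructor
        · linarith [neg_abs_le (d j), hcon j]
        · linarith [le_abs_self (d j), hcon j]
      set sg : Fin n → ℝ := fun j => if 0 ≤ d j then (1 : ℝ) else -1 with hsg
      have hsgabs : ∀ j, |sg j| = 1 := by
        intro j
        simp only [hsg]
        split_ifs <;> norm_num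
      have hq1 : p' + ρ' • sg ∈ Metric.closedBall p' ρ' := by
        rw [Metric.mem_closedBall]
        rw [dist_pi_le_iff hρ'pos.le]
        intro i
        rw [Pi.add_apply, Pi.smul_apply, smul_eq_mul, Real.dist_eq]
        rw [add_sub_cancel_left, abs_mul, abs_of_pos hρ'pos, hsgabs i, mul_one]
      have hq2 : p' - ρ' • sg ∈ Metric.closedBall p' ρ' := by
        rw [Metric.mem_closedBall]
        rw [dist_pi_le_iff hρ'pos.le]
        intro i
        rw [Pi.sub_apply, Pi.smul_apply, smul_eq_mul, Real.dist_eq]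
        rw [sub_sub_cancel_left, abs_neg, abs_mul, abs_of_pos hρ'pos, hsgabs i, mul_one]
      have hgap : (∑ i, (d i : ℝ) * (p' + ρ' • sg) i) - (∑ i, (d i : ℝ) * (p' - ρ' • sg) i)
          = 2 * ρ' * ∑ i, |(d i : ℝ)| := by
        have h1 : ∀ i, (d i : ℝ) * (p' + ρ' • sg) i - (d i : ℝ) * (p' - ρ' • sg) i
            = 2 * ρ' * ((d i : ℝ) * sg i) := by
          intro i
          simp only [Pi.add_apply, Pi.sub_apply, Pi.smul_apply, smul_eq_mul]
          ring
        have h2 : ∀ i, (d i : ℝ) * sg i = |(d i : ℝ)| := by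
          intro i
          simp only [hsg]
          split_ifs with h
          · rw [mul_one, abs_of_nonneg (by exact_mod_cast h)]
          · push_neg at h
            rw [abs_of_neg (by exact_mod_cast h)]
            ring
        rw [← Finset.sum_sub_distrib]
        calc ∑ i, ((d i : ℝ) * (p' + ρ' • sg) i - (d i : ℝ) * (p' - ρ' • sg) i)
            = ∑ i, 2 * ρ' * ((d i : ℝ) * sg i) := Finset.sum_congr rfl fun i _ => h1 i
          _ = 2 * ρ' * ∑ i, (d i : ℝ) * sg i := by rw [Finset.mul_sum]
          _ = 2 * ρ' * ∑ i, |(d i : ℝ)| := by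
              congr 1
              exact Finset.sum_congr rfl fun i _ => h2 i
      have hsum : ω ≤ 2 * ρ' * ∑ i, |(d i : ℝ)| := by
        have h3 : |(d j : ℝ)| ≤ ∑ i, |(d i : ℝ)| :=
          Finset.single_le_sum (fun i _ => abs_nonneg ((d i : ℝ))) (Finset.mem_univ j)
        have h4 : (M : ℝ) < |(d j : ℝ)| := by
          rw [← Int.cast_abs]
          exact_mod_cast hj
        have h5 : ω / (2 * ρ') ≤ (M : ℝ) := by
          rw [hM]
          exact Nat.le_ceil _
        have h6 : ω ≤ 2 * ρ' * (M : ℝ) := by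
          rw [div_le_iff₀ (by linarith : (0:ℝ) < 2 * ρ')] at h5
          linarith
        nlinarith [hρ'pos, h3, h4, h6]
      have hu : p' + ρ' • sg ∈ Ks := hballKs hq1
      have hv : p' - ρ' • sg ∈ Ks := hballKs hq2
      have hge := width_ge (c := fun i => (d i : ℝ)) hu hv
      rw [hgap] at hge
      exact le_trans (EReal.coe_le_coe_iff.2 hsum) hge
  -- apply flatness
  obtain ⟨z', hz'⟩ := hflat Ks hKsbdd isClosed_closure ((convex_convexHull ℝ G).closure) hvol
    hKswidth
  obtain ⟨hz'P, hz'T⟩ := hKsK hz'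
  have hγ' : γ ≤ ∑ i, c i * z' i := hγmin _ ⟨z', hz'P, rfl⟩
  have hz'f : f (fun i => (z' i : ℝ)) = ((∑ i, c i * z' i : ℤ) : ℝ) := hint z'
  have : (γ : ℝ) ≤ f (fun i => (z' i : ℝ)) := by
    rw [hz'f]
    exact_mod_cast hγ'
  have hz'T' : f (fun i => (z' i : ℝ)) ≤ T := hz'T
  linarith
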